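/- For all nonnegative integers a, b, n with a + b ≤ n, the quantity Δ₁(n,a,b) := 2 · ∑_{j=1}^{b} H_{n+1−j−a} · (b − 1 + κ_{j−1} + κ_{b−j} − κ_b) is nonpositive: Δ₁(n,a,b) ≤ 0. -/
import Mathlib

open Finset Filter Topology

/-- The `n`-th harmonic number `H_n = ∑_{i=1}^n 1/i`. -/
noncomputable def H (n : ℕ) : ℝ := ∑ i ∈ Finset.range n, (1 : ℝ) / (i + 1)

/-- `κ_n = 2(n+1)H_n - 4n`, the mean number of key comparisons for QuickSort on `n` keys. -/
noncomputable def κ (n : ℕ) : ℝ := 2 * (n + 1) * H n - 4 * n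

noncomputable def cterm (b i : ℕ) : ℝ := (b:ℝ) - 1 + κ (i-1) + κ (b-i) - κ b

lemma H_succ (n : ℕ) : H (n + 1) = H n + 1 / ((n : ℝ) + 1) := by
  simp [H, Finset.sum_range_succ]

lemma H_diff (m b : ℕ) (h : m ≤ b) : H b - H m = ∑ i ∈ Ico m b, (1 : ℝ) / (i + 1) := by
  rw [H, H]
  simp only [Finset.range_eq_Ico]
  rw [← Finset.sum_Ico_consecutive _ (Nat.zero_le m) h]
  ring

lemma H_sub_ge (m b : ℕ) (h : m ≤ b) :
    ((b : ℝ) - m) / b ≤ H b - H m := by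
  rw [H_diff m b h]
  calc ((b : ℝ) - m) / b = ∑ _i ∈ Ico m b, (1 : ℝ) / b := by
        rw [Finset.sum_const, Nat.card_Ico, nsmul_eq_mul, Nat.cast_sub h]
        ring
    _ ≤ ∑ i ∈ Ico m b, (1 : ℝ) / (i + 1) := by
        apply Finset.sum_le_sum
        intro i hi
        simp only [Finset.mem_Ico] at hi
        apply one_div_le_one_div_of_le
        · positivity
        · have : i + 1 ≤ b := hi.2
          exact_mod_cast this

lemma H_sub_le (j m : ℕ) (h : j ≤ m) :
    H m - H j ≤ ((m : ℝ) - j) / (j + 1) := by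
  rw [H_diff j m h]
  calc ∑ i ∈ Ico j m, (1 : ℝ) / (i + 1) ≤ ∑ _i ∈ Ico j m, (1 : ℝ) / (j + 1) := by
        apply Finset.sum_le_sum
        intro i hi
        simp only [Finset.mem_Ico] at hi
        apply one_div_le_one_div_of_le
        · positivity
        · have : j + 1 ≤ i + 1 := by omega
          exact_mod_cast this
    _ = ((m : ℝ) - j) / (j + 1) := by
        rw [Finset.sum_const, Nat.card_Ico, nsmul_eq_mul, Nat.cast_sub h]
        ring

noncomputable def S (b j : ℕ) : ℝ :=
  ((b:ℝ)+1)*((b:ℝ)-2*j)*H b + (j:ℝ)*((j:ℝ)+1)*H j - ((b:ℝ)-j)*((b:ℝ)-j+1)*H (b-j)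

lemma S_zero (b : ℕ) : S b 0 = 0 := by
  simp only [S, Nat.sub_zero, Nat.cast_zero]
  ring

lemma S_reflect (b j : ℕ) (h : j ≤ b) : S b (b - j) = - S b j := by
  unfold S
  rw [Nat.sub_sub_self h, Nat.cast_sub h]
  ring

lemma S_nonneg (b j : ℕ) (h2 : 2 * j ≤ b) : 0 ≤ S b j := by
  rcases Nat.eq_zero_or_pos b with hb | hb
  · subst hb
    have : j = 0 := by omega
    subst this
    simp [S_zero]
  have hjb : j ≤ b := by omega
  have hjbj : j ≤ b - j := by omega
  have hcast : ((b - j : ℕ) : ℝ) = (b : ℝ) - j := Nat.cast_sub hjb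
  have key : S b j = ((b:ℝ)+1)*((b:ℝ)-2*j)*(H b - H (b-j))
      - (j:ℝ)*((j:ℝ)+1)*(H (b-j) - H j) := by
    unfold S; ring
  have h1 : ((b : ℝ) - (b - j : ℕ)) / b ≤ H b - H (b - j) := H_sub_ge _ _ (Nat.sub_le b j)
  have h2' : H (b - j) - H j ≤ (((b - j : ℕ) : ℝ) - j) / (j + 1) := H_sub_le _ _ hjbj
  rw [hcast] at h1 h2'
  have hbpos : (0:ℝ) < b := by exact_mod_cast hb
  have hjpos : (0:ℝ) < (j:ℝ) + 1 := by positivity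
  have hc1 : (0:ℝ) ≤ ((b:ℝ)+1)*((b:ℝ)-2*j) := by
    have : (2*j : ℝ) ≤ b := by exact_mod_cast h2
    nlinarith
  have hc2 : (0:ℝ) ≤ (j:ℝ)*((j:ℝ)+1) := by positivity
  rw [key]
  have e1 : ((b:ℝ)+1)*((b:ℝ)-2*j)*(((b:ℝ) - ((b:ℝ) - j)) / b) ≤ ((b:ℝ)+1)*((b:ℝ)-2*j)*(H b - H (b-j)) :=
    mul_le_mul_of_nonneg_left h1 hc1
  have e2 : (j:ℝ)*((j:ℝ)+1)*(H (b-j) - H j) ≤ (j:ℝ)*((j:ℝ)+1)*((((b:ℝ) - j) - j) / (j + 1)) :=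
    mul_le_mul_of_nonneg_left h2' hc2
  have hb2 : (2*(j:ℝ)) ≤ (b:ℝ) := by exact_mod_cast h2
  have goal0 : (0:ℝ) ≤ ((b:ℝ)+1)*((b:ℝ)-2*j)*(((b:ℝ) - ((b:ℝ) - j)) / b)
      - (j:ℝ)*((j:ℝ)+1)*((((b:ℝ) - j) - j) / (j + 1)) := by
    have : ((b:ℝ)+1)*((b:ℝ)-2*j)*(((b:ℝ) - ((b:ℝ) - j)) / b)
      - (j:ℝ)*((j:ℝ)+1)*((((b:ℝ) - j) - j) / (j + 1)) = (j:ℝ)*((b:ℝ)-2*j)/b := by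
      field_simp
      ring
    rw [this]
    have : (0:ℝ) ≤ (j:ℝ)*((b:ℝ)-2*j) := by nlinarith [Nat.cast_nonneg (α := ℝ) j]
    positivity
  linarith

lemma S_step (b j : ℕ) (h : j + 1 ≤ b) : S b (j + 1) = S b j + cterm b (j + 1) := by
  obtain ⟨m, rfl⟩ : ∃ m, b = j + 1 + m := ⟨b - (j+1), by omega⟩
  unfold S cterm κ
  simp only [show j + 1 + m - j = m + 1 by omega, show j + 1 + m - (j + 1) = m by omega,
    Nat.add_sub_cancel]
  rw [H_succ j, H_succ m]
  have hj : ((j:ℝ) + 1) ≠ 0 := by positivity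
  have hm : ((m:ℝ) + 1) ≠ 0 := by positivity
  push_cast
  field_simp
  ring

lemma abel (P w : ℕ → ℝ) (n : ℕ) :
    ∑ j ∈ range n, (P (j+1) - P j) * w (j+1)
      = P n * w n - P 0 * w 0 + ∑ j ∈ range n, P j * (w j - w (j+1)) := by
  induction n with
  | zero => simp
  | succ n ih =>
    rw [Finset.sum_range_succ, Finset.sum_range_succ, ih]
    ring

theorem delta1_nonpos (a b n : ℕ) (h : a + b ≤ n) :
    2 * ∑ j ∈ Finset.Icc 1 b,
      H (n + 1 - j - a) * ((b : ℝ) - 1 + κ (j - 1) + κ (b - j) - κ b) ≤ 0 := by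
  set w : ℕ → ℝ := fun j => H (n + 1 - j - a) with hw
  have key : ∑ j ∈ Finset.Icc 1 b, w j * cterm b j
      = ∑ j ∈ range b, S b j * (w j - w (j+1)) := by
    rw [show (Finset.Icc 1 b) = Finset.Ico 1 (b+1) by rfl, Finset.sum_Ico_eq_sum_range]
    simp only [Nat.add_sub_cancel]
    calc ∑ j ∈ range b, w (1 + j) * cterm b (1 + j)
        = ∑ j ∈ range b, (S b (j+1) - S b j) * w (j+1) := by
          apply Finset.sum_congr rfl
          intro j hj
          simp only [Finset.mem_range] at hj
          rw [S_step b j (by omega)]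
          ring_nf
      _ = S b b * w b - S b 0 * w 0 + ∑ j ∈ range b, S b j * (w j - w (j+1)) := abel _ _ b
      _ = ∑ j ∈ range b, S b j * (w j - w (j+1)) := by
          have : S b b = 0 := by
            have := S_reflect b 0 (Nat.zero_le b)
            simpa [S_zero] using this
          simp [this, S_zero]
  -- now suffices to bound RHS of key
  suffices hsig : ∑ j ∈ range b, S b j * (w j - w (j+1)) ≤ 0 by
    have goaleq : ∑ j ∈ Finset.Icc 1 b,
        H (n + 1 - j - a) * ((b : ℝ) - 1 + κ (j - 1) + κ (b - j) - κ b)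
        = ∑ j ∈ Finset.Icc 1 b, w j * cterm b j := by
      apply Finset.sum_congr rfl
      intro j _
      simp [cterm, hw]
    rw [goaleq, key]
    linarith
  rcases Nat.eq_zero_or_pos b with hb | hb
  · subst hb; simp
  obtain ⟨m, rfl⟩ : ∃ m, b = m + 1 := ⟨b - 1, by omega⟩
  set b := m + 1
  set D : ℕ → ℝ := fun j => w j - w (j + 1) with hD
  have Dval : ∀ j, 1 ≤ j → j ≤ m → D j = 1 / (((n - j - a : ℕ) : ℝ) + 1) := by
    intro j h1 h2
    have hk : n + 1 - j - a = (n - j - a) + 1 := by omega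
    have hk' : n + 1 - (j + 1) - a = n - j - a := by omega
    simp only [hD, hw, hk, hk', H_succ]
    ring
  have Dpos : ∀ j, 1 ≤ j → j ≤ m → 0 < D j := by
    intro j h1 h2
    rw [Dval j h1 h2]
    positivity
  have Dmono : ∀ i j, 1 ≤ i → i ≤ j → j ≤ m → D i ≤ D j := by
    intro i j h1 h2 h3
    rw [Dval i h1 (le_trans h2 h3), Dval j (le_trans h1 h2) h3]
    apply one_div_le_one_div_of_le
    · positivity
    · have hle : n - j - a ≤ n - i - a := by omega
      have := (Nat.cast_le (α := ℝ)).mpr hle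
      linarith
  -- split off j = 0 term and reflect
  rw [Finset.sum_range_succ']
  simp only [S_zero, zero_mul, add_zero]
  have hrefl : ∑ j ∈ range m, S b (j + 1) * D (j + 1)
      = ∑ j ∈ range m, S b (b - (j + 1)) * D (b - (j + 1)) := by
    rw [← Finset.sum_range_reflect]
    apply Finset.sum_congr rfl
    intro j hj
    simp only [Finset.mem_range] at hj
    congr 2 <;> omega
  have twice : (2:ℝ) * ∑ j ∈ range m, S b (j + 1) * D (j + 1)
      = ∑ j ∈ range m, (S b (j + 1) * D (j + 1) + S b (b - (j + 1)) * D (b - (j + 1))) := by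
    rw [Finset.sum_add_distrib, ← hrefl]; ring
  have term_nonpos : ∀ j ∈ range m,
      S b (j + 1) * D (j + 1) + S b (b - (j + 1)) * D (b - (j + 1)) ≤ 0 := by
    intro j hj
    simp only [Finset.mem_range] at hj
    set i := j + 1 with hi
    have hib : i ≤ b := by omega
    have h1i : 1 ≤ i := by omega
    have him : i ≤ m := by omega
    have h1bi : 1 ≤ b - i := by omega
    have hbim : b - i ≤ m := by omega
    rw [S_reflect b i hib]
    rcases le_or_gt (2 * i) b with hc | hc
    · -- S b i ≥ 0, D i ≤ D (b - i)
      have hS : 0 ≤ S b i := S_nonneg b i hc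
      have hDle : D i ≤ D (b - i) := Dmono i (b - i) h1i (by omega) hbim
      nlinarith
    · -- S b i ≤ 0 : S b i = - S b (b - i) with S b (b-i) ≥ 0
      have hS' : 0 ≤ S b (b - i) := S_nonneg b (b - i) (by omega)
      have hSi : S b i ≤ 0 := by
        have := S_reflect b (b - i) (Nat.sub_le b i)
        rw [show b - (b - i) = i by omega] at this
        linarith
      have hDle : D (b - i) ≤ D i := Dmono (b - i) i h1bi (by omega) him
      nlinarith [Dpos (b-i) h1bi hbim]
  have := Finset.sum_nonpos term_nonpos
  linarith [twice, this]
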